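/- Let X̂ ∈ ℝ^{n×n} be symmetric, let Û ∈ ℝ^{n×r} consist of orthonormal eigenvectors of X̂ for its r largest eigenvalues, and let U ∈ ℝ^{n×r} consist of orthonormal eigenvectors of X₀ for its r largest eigenvalues, written U = Zν with ν ∈ ℝ^{r×r} (so that U has constant rows on each cluster). Let C ∈ ℝ^{n×r}, with rows c_i, minimize ‖Û − M‖_F² over all matrices M with at most r distinct rows (k-means on the rows of Û). Then there exists an r×r orthogonal matrix O such that every node i with ‖c_i − Z_iνO‖ < 1/√(2 m_max) is correctly clustered (i.e. ‖c_i − Z_iνO‖ < ‖c_i − Z_jνO‖ whenever Z_j ≠ Z_i), and the number of nodes i with ‖c_i − Z_iνO‖ ≥ 1/√(2 m_max) is at most 64 m_max ‖X̂ − X₀‖_F². -/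

import Mathlib

open Matrix
open scoped Classical

noncomputable section

/-- The size `m_k` of cluster `C_k = {i : z i = k}` of the partition given by `z`. -/
def clusterSize {n r : ℕ} (z : Fin n → Fin r) (k : Fin r) : ℕ :=
  (Finset.univ.filter fun i => z i = k).card

/-- The largest cluster size `m_max`. -/
def mMax {n r : ℕ} [NeZero r] (z : Fin n → Fin r) : ℕ :=
  Finset.univ.sup' Finset.univ_nonempty (clusterSize z)

/-- The ground-truth clustering matrix `X₀`, `(X₀)_{ij} = 1/m_k` if `i,j ∈ C_k`, else `0`. -/
def groundTruth {n r : ℕ} (z : Fin n → Fin r) : Matrix (Fin n) (Fin n) ℝ :=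
  Matrix.of fun i j => if z i = z j then ((clusterSize z (z i) : ℝ))⁻¹ else 0

/-- Squared Frobenius norm `‖A‖_F²`. -/
def frobSq {m k : ℕ} (A : Matrix (Fin m) (Fin k) ℝ) : ℝ := ∑ i, ∑ j, (A i j) ^ 2

/-- The 0/1 membership matrix `Z` with `Z_{ik} = 1` iff `i ∈ C_k`. -/
def Zmat {n r : ℕ} (z : Fin n → Fin r) : Matrix (Fin n) (Fin r) ℝ :=
  Matrix.of fun i k => if z i = k then 1 else 0

/-- `U` consists of (orthonormal) top-`m` eigenvectors of the symmetric matrix `S`. -/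
def IsTopEigenvectors {d m : ℕ} (S : Matrix (Fin d) (Fin d) ℝ)
    (U : Matrix (Fin d) (Fin m) ℝ) : Prop :=
  Uᵀ * U = 1 ∧
    ∃ θ : Fin m → ℝ,
      (∀ j, S.mulVec (fun i => U i j) = θ j • fun i => U i j) ∧
        ∀ w : Fin d → ℝ, (∀ j, (fun i => U i j) ⬝ᵥ w = 0) →
          ∀ j, w ⬝ᵥ S.mulVec w ≤ θ j * (w ⬝ᵥ w)

/-- `C` has at most `r` distinct rows. -/
def HasAtMostRows {n r : ℕ} (C : Matrix (Fin n) (Fin r) ℝ) : Prop :=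
  ∃ (g : Fin n → Fin r) (rows : Fin r → Fin r → ℝ), ∀ i, C i = rows (g i)



lemma frobSq_nonneg {m k : ℕ} (A : Matrix (Fin m) (Fin k) ℝ) : 0 ≤ frobSq A := by
  refine Finset.sum_nonneg fun i _ => Finset.sum_nonneg fun j _ => sq_nonneg _

lemma frobSq_eq_trace {m k : ℕ} (A : Matrix (Fin m) (Fin k) ℝ) :
    frobSq A = Matrix.trace (Aᵀ * A) := by
  simp only [frobSq, Matrix.trace, Matrix.diag, Matrix.mul_apply, Matrix.transpose_apply]
  rw [Finset.sum_comm]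
  simp [sq]

lemma frobSq_neg_sub {m k : ℕ} (A B : Matrix (Fin m) (Fin k) ℝ) :
    frobSq (A - B) = frobSq (B - A) := by
  simp only [frobSq]
  congr 1; ext i; congr 1; ext j
  have : (A - B) i j = -((B - A) i j) := by simp [Matrix.sub_apply]
  rw [this, neg_pow]; ring

lemma trace_mul_le_sqrt {m k : ℕ} (A B : Matrix (Fin m) (Fin k) ℝ) :
    Matrix.trace (Aᵀ * B) ≤ Real.sqrt (frobSq A) * Real.sqrt (frobSq B) := by
  have h1 : Matrix.trace (Aᵀ * B) = ∑ p : Fin m × Fin k, A p.1 p.2 * B p.1 p.2 := by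
    simp only [Matrix.trace, Matrix.diag, Matrix.mul_apply, Matrix.transpose_apply]
    rw [Finset.sum_comm, Fintype.sum_prod_type]
  have h2 : frobSq A = ∑ p : Fin m × Fin k, (A p.1 p.2) ^ 2 := by
    simp [frobSq, Fintype.sum_prod_type]
  have h3 : frobSq B = ∑ p : Fin m × Fin k, (B p.1 p.2) ^ 2 := by
    simp [frobSq, Fintype.sum_prod_type]
  rw [h1, h2, h3]
  exact Real.sum_mul_le_sqrt_mul_sqrt _ _ _

lemma sqrt_frobSq_add_le {m k : ℕ} (A B : Matrix (Fin m) (Fin k) ℝ) :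
    Real.sqrt (frobSq (A + B)) ≤ Real.sqrt (frobSq A) + Real.sqrt (frobSq B) := by
  have key : frobSq (A + B) ≤ (Real.sqrt (frobSq A) + Real.sqrt (frobSq B)) ^ 2 := by
    have expand : frobSq (A + B) = frobSq A + 2 * Matrix.trace (Aᵀ * B) + frobSq B := by
      simp only [frobSq_eq_trace, Matrix.transpose_add, Matrix.add_mul, Matrix.mul_add,
        Matrix.trace_add]
      have : Matrix.trace (Bᵀ * A) = Matrix.trace (Aᵀ * B) := by
        rw [← Matrix.trace_transpose (Bᵀ * A), Matrix.transpose_mul, Matrix.transpose_transpose]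
      rw [this]; ring
    have hA := Real.sq_sqrt (frobSq_nonneg A)
    have hB := Real.sq_sqrt (frobSq_nonneg B)
    nlinarith [trace_mul_le_sqrt A B]
  calc Real.sqrt (frobSq (A + B)) ≤ Real.sqrt ((Real.sqrt (frobSq A) + Real.sqrt (frobSq B)) ^ 2) :=
        Real.sqrt_le_sqrt key
    _ = _ := by
        rw [Real.sqrt_sq (by positivity)]

lemma transpose_stdBM {r : ℕ} (i j : Fin r) (c : ℝ) :
    (Matrix.single i j c)ᵀ = Matrix.single j i c := by
  ext a b
  simp only [Matrix.transpose_apply, Matrix.single, Matrix.of_apply]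
  by_cases h1 : i = b <;> by_cases h2 : j = a <;> simp [h1, h2]

lemma trace_stdBM_mul {r : ℕ} (k l : Fin r) (c : ℝ) (S : Matrix (Fin r) (Fin r) ℝ) :
    Matrix.trace (Matrix.single k l c * S) = c * S l k := by
  rw [Matrix.trace, Finset.sum_eq_single k]
  · simp
  · intro m _ hm
    simp only [Matrix.diag]
    rw [Matrix.single_mul_apply_of_ne c k l m m hm]
  · simp

lemma symm_of_trace_max {r : ℕ} (S : Matrix (Fin r) (Fin r) ℝ)
    (h : ∀ Q : Matrix (Fin r) (Fin r) ℝ, Qᵀ * Q = 1 → Matrix.trace (Qᵀ * S) ≤ Matrix.trace S) :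
    Sᵀ = S := by
  ext i j
  rw [Matrix.transpose_apply]
  rcases eq_or_ne i j with rfl | hij
  · rfl
  set a := S i i + S j j with ha
  set b := S j i - S i j with hb
  have key : ∀ c s : ℝ, c ^ 2 + s ^ 2 = 1 → (c - 1) * a + s * b ≤ 0 := by
    intro c s hcs
    set A : Matrix (Fin r) (Fin r) ℝ :=
      Matrix.single i i 1 + Matrix.single j j 1 with hA
    set B : Matrix (Fin r) (Fin r) ℝ :=
      Matrix.single j i 1 - Matrix.single i j 1 with hB
    have hAA : A * A = A := by
      simp only [hA, Matrix.add_mul, Matrix.mul_add, Matrix.single_mul_single_same,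
        Matrix.single_mul_single_of_ne _ _ _ _ hij, Matrix.single_mul_single_of_ne _ _ _ _ hij.symm,
        one_mul, add_zero, zero_add]
    have hAB : A * B = B := by
      simp only [hA, hB, Matrix.add_mul, Matrix.mul_add, Matrix.mul_sub,
        Matrix.single_mul_single_same,
        Matrix.single_mul_single_of_ne _ _ _ _ hij, Matrix.single_mul_single_of_ne _ _ _ _ hij.symm,
        one_mul]
      abel
    have hBA : B * A = B := by
      simp only [hA, hB, Matrix.add_mul, Matrix.mul_add, Matrix.sub_mul,
        Matrix.single_mul_single_same,
        Matrix.single_mul_single_of_ne _ _ _ _ hij, Matrix.single_mul_single_of_ne _ _ _ _ hij.symm,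
        one_mul]
      abel
    have hBB : B * B = -A := by
      simp only [hA, hB, Matrix.sub_mul, Matrix.mul_sub,
        Matrix.single_mul_single_same,
        Matrix.single_mul_single_of_ne _ _ _ _ hij, Matrix.single_mul_single_of_ne _ _ _ _ hij.symm,
        one_mul]
      abel
    have hAT : Aᵀ = A := by
      simp only [hA, Matrix.transpose_add, transpose_stdBM]
    have hBT : Bᵀ = -B := by
      simp only [hB, Matrix.transpose_sub, transpose_stdBM]
      abel
    set Q : Matrix (Fin r) (Fin r) ℝ := 1 + (c - 1) • A + s • B with hQ
    have hQT : Qᵀ = 1 + (c - 1) • A - s • B := by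
      simp only [hQ, Matrix.transpose_add, Matrix.transpose_smul, Matrix.transpose_one, hAT, hBT,
        smul_neg]
      abel
    have horth : Qᵀ * Q = 1 := by
      have expand : Qᵀ * Q = 1 + ((c - 1) ^ 2 + 2 * (c - 1) + s ^ 2) • A := by
        rw [hQT, hQ]
        simp only [Matrix.add_mul, Matrix.mul_add, Matrix.sub_mul, Matrix.mul_sub,
          Matrix.smul_mul, Matrix.mul_smul, hAA, hAB, hBA, hBB, Matrix.mul_one, Matrix.one_mul,
          smul_smul, smul_neg]
        module
      have hz : (c - 1) ^ 2 + 2 * (c - 1) + s ^ 2 = 0 := by linear_combination hcs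
      rw [expand, hz, zero_smul, add_zero]
    have htr : Matrix.trace (Qᵀ * S) = Matrix.trace S + ((c - 1) * a + s * b) := by
      rw [hQT]
      simp only [Matrix.add_mul, Matrix.sub_mul, Matrix.smul_mul, Matrix.one_mul,
        Matrix.trace_add, Matrix.trace_sub, Matrix.trace_smul, hA, hB]
      simp only [Matrix.add_mul, Matrix.sub_mul, Matrix.trace_add, Matrix.trace_sub,
        trace_stdBM_mul, one_mul]
      rw [ha, hb]
      simp only [smul_eq_mul]
      ring
    have := h Q horth
    rw [htr] at this
    linarith
  rcases eq_or_ne (Real.sqrt (a ^ 2 + b ^ 2)) 0 with hρ | hρ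
  · have h0 : a ^ 2 + b ^ 2 ≤ 0 := by
      have hnn : 0 ≤ a ^ 2 + b ^ 2 := by positivity
      nlinarith [Real.sq_sqrt hnn, hρ]
    have hb0 : b = 0 := by nlinarith [sq_nonneg a, sq_nonneg b]
    rw [hb] at hb0; linarith
  · set ρ := Real.sqrt (a ^ 2 + b ^ 2) with hρdef
    have hρpos : 0 < ρ := lt_of_le_of_ne (Real.sqrt_nonneg _) (Ne.symm hρ)
    have hρsq : ρ ^ 2 = a ^ 2 + b ^ 2 := Real.sq_sqrt (by positivity)
    have hcs : (a / ρ) ^ 2 + (b / ρ) ^ 2 = 1 := by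
      field_simp
      linarith [hρsq]
    have hk := key (a / ρ) (b / ρ) hcs
    have h1 : (a ^ 2 + b ^ 2) / ρ - a ≤ 0 := by
      have : (a / ρ - 1) * a + b / ρ * b = (a ^ 2 + b ^ 2) / ρ - a := by ring
      linarith [hk, this ▸ hk]
    have hρle : ρ ≤ a := by
      rw [← hρsq] at h1
      have : ρ ^ 2 / ρ = ρ := by field_simp
      rw [this] at h1
      linarith
    have haρ : a ≤ ρ := by
      have h2 : a ≤ |a| := le_abs_self a
      have h3 : |a| = Real.sqrt (a ^ 2) := (Real.sqrt_sq_eq_abs a).symm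
      have h4 : Real.sqrt (a ^ 2) ≤ ρ := Real.sqrt_le_sqrt (by nlinarith [sq_nonneg b])
      linarith
    have : ρ = a := le_antisymm hρle haρ
    have hb0 : b ^ 2 = 0 := by nlinarith
    have : b = 0 := by nlinarith
    rw [hb] at this; linarith

lemma dot_self_nonneg {d : ℕ} (v : Fin d → ℝ) : 0 ≤ v ⬝ᵥ v :=
  Finset.sum_nonneg fun i _ => mul_self_nonneg _

lemma dotProduct_CS {d : ℕ} (v w : Fin d → ℝ) :
    v ⬝ᵥ w ≤ Real.sqrt (v ⬝ᵥ v) * Real.sqrt (w ⬝ᵥ w) := by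
  have h := Real.sum_mul_le_sqrt_mul_sqrt Finset.univ v w
  simpa [dotProduct, sq] using h

lemma exists_orth_polar {r : ℕ} (M : Matrix (Fin r) (Fin r) ℝ)
    (hM : ∀ v : Fin r → ℝ, (M *ᵥ v) ⬝ᵥ (M *ᵥ v) ≤ v ⬝ᵥ v) :
    ∃ O : Matrix (Fin r) (Fin r) ℝ, Oᵀ * O = 1 ∧
      Matrix.trace (Mᵀ * M) ≤ Matrix.trace (Oᵀ * M) := by
  classical
  set K : Set (Matrix (Fin r) (Fin r) ℝ) := {O | Oᵀ * O = 1} with hK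
  have hKclosed : IsClosed K := by
    have hcont : Continuous fun O : Matrix (Fin r) (Fin r) ℝ => Oᵀ * O :=
      (Continuous.matrix_transpose continuous_id).matrix_mul continuous_id
    have heq : K = (fun O : Matrix (Fin r) (Fin r) ℝ => Oᵀ * O) ⁻¹' {1} := by
      ext O; simp [hK]
    rw [heq]
    exact IsClosed.preimage hcont isClosed_singleton
  have hKsub : K ⊆ Set.univ.pi fun _ : Fin r =>
      Set.univ.pi fun _ : Fin r => Set.Icc (-1 : ℝ) 1 := by
    intro O hO
    intro i _
    intro j _
    rw [Set.mem_Icc]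
    have hO' : Oᵀ * O = 1 := hO
    have hcol : ∑ m, O m j * O m j = 1 := by
      have := congrFun (congrFun hO' j) j
      simpa [Matrix.mul_apply, Matrix.one_apply] using this
    have hle : O i j * O i j ≤ ∑ m, O m j * O m j :=
      Finset.single_le_sum (f := fun m => O m j * O m j)
        (fun m _ => mul_self_nonneg _) (Finset.mem_univ i)
    rw [hcol] at hle
    constructor <;> nlinarith
  have hKcompact : IsCompact K :=
    IsCompact.of_isClosed_subset
      (isCompact_univ_pi fun _ => isCompact_univ_pi fun _ => isCompact_Icc) hKclosed hKsub
  have hne : K.Nonempty := ⟨1, by simp [hK]⟩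
  have hcontf : ContinuousOn (fun O : Matrix (Fin r) (Fin r) ℝ => Matrix.trace (Oᵀ * M)) K :=
    (Continuous.matrix_trace
      ((Continuous.matrix_transpose continuous_id).matrix_mul continuous_const)).continuousOn
  obtain ⟨O, hOK, hOmax⟩ := hKcompact.exists_isMaxOn hne hcontf
  have hOK' : Oᵀ * O = 1 := hOK
  have hOO : O * Oᵀ = 1 := mul_eq_one_comm.mp hOK'
  refine ⟨O, hOK', ?_⟩
  set S := Oᵀ * M with hS
  have hcomp : ∀ Q : Matrix (Fin r) (Fin r) ℝ, Qᵀ * Q = 1 →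
      Matrix.trace (Qᵀ * S) ≤ Matrix.trace S := by
    intro Q hQ
    have hOQK : O * Q ∈ K := by
      show (O * Q)ᵀ * (O * Q) = 1
      rw [Matrix.transpose_mul]
      calc Qᵀ * Oᵀ * (O * Q) = Qᵀ * ((Oᵀ * O) * Q) := by simp only [Matrix.mul_assoc]
        _ = Qᵀ * Q := by rw [hOK', Matrix.one_mul]
        _ = 1 := hQ
    have hmax := hOmax hOQK
    have heq : Matrix.trace ((O * Q)ᵀ * M) = Matrix.trace (Qᵀ * S) := by
      rw [Matrix.transpose_mul, hS, Matrix.mul_assoc]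
    simp only [Set.mem_setOf_eq] at hmax
    rw [heq] at hmax
    exact hmax
  have hsym : Sᵀ = S := symm_of_trace_max S hcomp
  have hHerm : S.IsHermitian := by
    rw [Matrix.IsHermitian]
    ext k l
    rw [Matrix.conjTranspose_apply]
    simpa using congrFun (congrFun hsym k) l
  set V : Matrix (Fin r) (Fin r) ℝ := (hHerm.eigenvectorUnitary : Matrix (Fin r) (Fin r) ℝ)
    with hV
  set lam : Fin r → ℝ := hHerm.eigenvalues with hlam
  have hstarV : star (hHerm.eigenvectorUnitary : Matrix (Fin r) (Fin r) ℝ) = Vᵀ := by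
    rw [Matrix.star_eq_conjTranspose]
    ext k l
    rw [Matrix.conjTranspose_apply]
    simp [hV]
  have hVV : Vᵀ * V = 1 := by
    rw [← hstarV]
    exact Matrix.mem_unitaryGroup_iff'.mp hHerm.eigenvectorUnitary.2
  have hVVT : V * Vᵀ = 1 := mul_eq_one_comm.mp hVV
  have cancel : ∀ X : Matrix (Fin r) (Fin r) ℝ, Vᵀ * (V * X) = X := by
    intro X; rw [← Matrix.mul_assoc, hVV, Matrix.one_mul]
  have hspec : S = V * Matrix.diagonal lam * Vᵀ := by
    have h := hHerm.spectral_theorem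
    rw [Unitary.conjStarAlgAut_apply] at h
    rw [hstarV] at h
    have hof : (RCLike.ofReal ∘ lam : Fin r → ℝ) = lam := by ext x; simp
    rw [← hV] at h
    rw [h, hof]
  have hconjtr : ∀ D : Matrix (Fin r) (Fin r) ℝ, Matrix.trace (V * D * Vᵀ) = Matrix.trace D := by
    intro D
    rw [Matrix.trace_mul_comm (V * D) Vᵀ, ← Matrix.mul_assoc, hVV, Matrix.one_mul]
  have hmulconj : ∀ D1 D2 : Matrix (Fin r) (Fin r) ℝ,
      (V * D1 * Vᵀ) * (V * D2 * Vᵀ) = V * (D1 * D2) * Vᵀ := by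
    intro D1 D2
    simp only [Matrix.mul_assoc, cancel]
  have htrS : Matrix.trace S = ∑ l, lam l := by
    rw [hspec, hconjtr, Matrix.trace_diagonal]
  have hlam_nonneg : ∀ k, 0 ≤ lam k := by
    intro k₀
    set ε : Fin r → ℝ := fun l => if l = k₀ then -1 else 1 with hε
    set Q := V * Matrix.diagonal ε * Vᵀ with hQ
    have hQT : Qᵀ = Q := by
      rw [hQ]
      simp only [Matrix.transpose_mul, Matrix.diagonal_transpose, Matrix.transpose_transpose,
        Matrix.mul_assoc]
    have hεε : (fun l => ε l * ε l) = fun _ => (1 : ℝ) := by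
      ext l; by_cases h : l = k₀ <;> simp [hε, h]
    have hQQ : Qᵀ * Q = 1 := by
      rw [hQT, hQ, hmulconj, Matrix.diagonal_mul_diagonal, hεε, Matrix.diagonal_one,
        Matrix.mul_one, hVVT]
    have htr : Matrix.trace (Qᵀ * S) = ∑ l, ε l * lam l := by
      rw [hQT, hQ, hspec, hmulconj, Matrix.diagonal_mul_diagonal, hconjtr,
        Matrix.trace_diagonal]
    have hc := hcomp Q hQQ
    rw [htr, htrS] at hc
    have hdiff : ∑ l, lam l - ∑ l, ε l * lam l = 2 * lam k₀ := by
      rw [← Finset.sum_sub_distrib]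
      rw [Finset.sum_eq_single k₀]
      · simp [hε]; ring
      · intro m _ hm; simp [hε, hm]
      · simp
    linarith
  have hlam_le_one : ∀ k, lam k ≤ 1 := by
    intro k
    set v : Fin r → ℝ := fun i => V i k with hv
    have hSV : S * V = V * Matrix.diagonal lam := by
      rw [hspec]
      calc V * Matrix.diagonal lam * Vᵀ * V
          = V * Matrix.diagonal lam * (Vᵀ * V) := by simp only [Matrix.mul_assoc]
        _ = V * Matrix.diagonal lam := by rw [hVV, Matrix.mul_one]
    have hSv : S *ᵥ v = fun i => lam k * v i := by
      ext i
      have h1 : (S * V) i k = (V * Matrix.diagonal lam) i k := by rw [hSV]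
      rw [Matrix.mul_diagonal] at h1
      simpa [Matrix.mulVec, dotProduct, Matrix.mul_apply, hv, mul_comm] using h1
    have hvv : v ⬝ᵥ v = 1 := by
      have := congrFun (congrFun hVV k) k
      simpa [Matrix.mul_apply, Matrix.one_apply, dotProduct, hv] using this
    have heig : v ⬝ᵥ (S *ᵥ v) = lam k := by
      rw [hSv]
      have : v ⬝ᵥ (fun i => lam k * v i) = lam k * (v ⬝ᵥ v) := by
        simp only [dotProduct, Finset.mul_sum]
        exact Finset.sum_congr rfl fun i _ => by ring
      rw [this, hvv, mul_one]
    have hrew : v ⬝ᵥ (S *ᵥ v) = (O *ᵥ v) ⬝ᵥ (M *ᵥ v) := by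
      rw [hS, ← Matrix.mulVec_mulVec, Matrix.dotProduct_mulVec, Matrix.vecMul_transpose]
    have hOv : (O *ᵥ v) ⬝ᵥ (O *ᵥ v) = 1 := by
      have h1 : v ⬝ᵥ ((Oᵀ * O) *ᵥ v) = (O *ᵥ v) ⬝ᵥ (O *ᵥ v) := by
        rw [← Matrix.mulVec_mulVec, Matrix.dotProduct_mulVec, Matrix.vecMul_transpose]
      rw [← h1, hOK', Matrix.one_mulVec, hvv]
    have hMv : (M *ᵥ v) ⬝ᵥ (M *ᵥ v) ≤ 1 := by
      have := hM v
      rw [hvv] at this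
      exact this
    have hcs := dotProduct_CS (O *ᵥ v) (M *ᵥ v)
    rw [hOv] at hcs
    have hsq1 : Real.sqrt 1 = 1 := Real.sqrt_one
    have h2 : Real.sqrt ((M *ᵥ v) ⬝ᵥ (M *ᵥ v)) ≤ 1 := by
      rw [← hsq1]
      exact Real.sqrt_le_sqrt hMv
    calc lam k = v ⬝ᵥ (S *ᵥ v) := heig.symm
      _ = (O *ᵥ v) ⬝ᵥ (M *ᵥ v) := hrew
      _ ≤ Real.sqrt 1 * Real.sqrt ((M *ᵥ v) ⬝ᵥ (M *ᵥ v)) := hcs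
      _ ≤ 1 := by rw [hsq1, one_mul]; exact h2
  have hMM : Mᵀ * M = Sᵀ * S := by
    rw [hS, Matrix.transpose_mul, Matrix.transpose_transpose]
    calc Mᵀ * M = Mᵀ * (1 * M) := by rw [Matrix.one_mul]
      _ = Mᵀ * ((O * Oᵀ) * M) := by rw [hOO]
      _ = Mᵀ * O * (Oᵀ * M) := by simp only [Matrix.mul_assoc]
  have htrMM : Matrix.trace (Mᵀ * M) = ∑ l, lam l * lam l := by
    rw [hMM, hsym, hspec, hmulconj, Matrix.diagonal_mul_diagonal, hconjtr,
      Matrix.trace_diagonal]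
  rw [htrMM, htrS]
  apply Finset.sum_le_sum
  intro l _
  nlinarith [hlam_nonneg l, hlam_le_one l]

lemma mulVec_isometry {n r : ℕ} (U : Matrix (Fin n) (Fin r) ℝ) (hUU : Uᵀ * U = 1)
    (v : Fin r → ℝ) : (U *ᵥ v) ⬝ᵥ (U *ᵥ v) = v ⬝ᵥ v := by
  have h : v ⬝ᵥ ((Uᵀ * U) *ᵥ v) = (U *ᵥ v) ⬝ᵥ (U *ᵥ v) := by
    rw [← Matrix.mulVec_mulVec, Matrix.dotProduct_mulVec, Matrix.vecMul_transpose]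
  rw [← h, hUU, Matrix.one_mulVec]

lemma proj_dot_le {n r : ℕ} (U : Matrix (Fin n) (Fin r) ℝ) (hUU : Uᵀ * U = 1)
    (x : Fin n → ℝ) : (Uᵀ *ᵥ x) ⬝ᵥ (Uᵀ *ᵥ x) ≤ x ⬝ᵥ x := by
  set y := Uᵀ *ᵥ x with hy
  set q := x - U *ᵥ y with hq
  have hUy : (U *ᵥ y) ⬝ᵥ (U *ᵥ y) = y ⬝ᵥ y := mulVec_isometry U hUU y
  have hxy : x ⬝ᵥ (U *ᵥ y) = y ⬝ᵥ y := by
    rw [Matrix.dotProduct_mulVec, ← Matrix.mulVec_transpose, ← hy]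
  have hq2 : q ⬝ᵥ q = x ⬝ᵥ x - y ⬝ᵥ y := by
    rw [hq, sub_dotProduct, dotProduct_sub, dotProduct_sub, hUy, hxy]
    have h2 : (U *ᵥ y) ⬝ᵥ x = y ⬝ᵥ y := by rw [dotProduct_comm, hxy]
    rw [h2]; ring
  have := dot_self_nonneg q
  rw [hq2] at this
  linarith

lemma ZtZ {n r : ℕ} (z : Fin n → Fin r) :
    (Zmat z)ᵀ * Zmat z = Matrix.diagonal fun k => (clusterSize z k : ℝ) := by
  ext k l
  simp only [Matrix.mul_apply, Matrix.transpose_apply, Zmat, Matrix.of_apply,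
    Matrix.diagonal_apply]
  by_cases hkl : k = l
  · subst hkl
    simp only [if_pos rfl]
    rw [clusterSize, Finset.card_filter]
    push_cast
    apply Finset.sum_congr rfl
    intro i _
    by_cases h : z i = k <;> simp [h]
  · rw [if_neg hkl]
    apply Finset.sum_eq_zero
    intro i _
    by_cases h1 : z i = k
    · have h2 : ¬ z i = l := fun h2 => hkl (h1 ▸ h2 ▸ rfl)
      simp [h1, h2, hkl]
    · simp [h1]

lemma clusterSize_pos {n r : ℕ} {z : Fin n → Fin r} (hz : Function.Surjective z) (k : Fin r) :
    0 < clusterSize z k := by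
  obtain ⟨i, hi⟩ := hz k
  exact Finset.card_pos.mpr ⟨i, by simp [hi]⟩

lemma nu_nuT {n r : ℕ} {z : Fin n → Fin r} (hz : Function.Surjective z)
    {ν : Matrix (Fin r) (Fin r) ℝ} (hUU : (Zmat z * ν)ᵀ * (Zmat z * ν) = 1) :
    ν * νᵀ = Matrix.diagonal fun k => ((clusterSize z k : ℝ))⁻¹ := by
  have hsqrt_pos : ∀ k, (0 : ℝ) < Real.sqrt (clusterSize z k) := fun k =>
    Real.sqrt_pos.mpr (by exact_mod_cast clusterSize_pos hz k)
  set Δ : Matrix (Fin r) (Fin r) ℝ := Matrix.diagonal fun k => Real.sqrt (clusterSize z k)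
    with hΔ
  set Δ' : Matrix (Fin r) (Fin r) ℝ :=
    Matrix.diagonal fun k => (Real.sqrt (clusterSize z k))⁻¹ with hΔ'
  have hΔΔ : Δ * Δ = Matrix.diagonal fun k => (clusterSize z k : ℝ) := by
    rw [hΔ, Matrix.diagonal_mul_diagonal]
    have hf : (fun k => Real.sqrt (clusterSize z k) * Real.sqrt (clusterSize z k)) =
        fun k => ((clusterSize z k : ℝ)) := by
      funext k; exact Real.mul_self_sqrt (Nat.cast_nonneg _)
    rw [hf]
  have hΔ'Δ : Δ' * Δ = 1 := by
    rw [hΔ', hΔ, Matrix.diagonal_mul_diagonal]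
    have : (fun k => (Real.sqrt (clusterSize z k))⁻¹ * Real.sqrt (clusterSize z k)) =
        fun _ => (1 : ℝ) := by
      ext k; exact inv_mul_cancel₀ (hsqrt_pos k).ne'
    rw [this, Matrix.diagonal_one]
  have hΔΔ' : Δ * Δ' = 1 := by
    rw [hΔ, hΔ', Matrix.diagonal_mul_diagonal]
    have : (fun k => Real.sqrt (clusterSize z k) * (Real.sqrt (clusterSize z k))⁻¹) =
        fun _ => (1 : ℝ) := by
      ext k; exact mul_inv_cancel₀ (hsqrt_pos k).ne'
    rw [this, Matrix.diagonal_one]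
  have h1 : νᵀ * ((Δ * Δ) * ν) = 1 := by
    rw [hΔΔ, ← ZtZ z]
    rw [Matrix.transpose_mul] at hUU
    calc νᵀ * ((Zmat z)ᵀ * Zmat z * ν) = νᵀ * (Zmat z)ᵀ * (Zmat z * ν) := by
          simp only [Matrix.mul_assoc]
      _ = 1 := hUU
  have hW : (Δ * ν)ᵀ * (Δ * ν) = 1 := by
    rw [Matrix.transpose_mul]
    have hΔT : Δᵀ = Δ := Matrix.diagonal_transpose _
    rw [hΔT]
    calc νᵀ * Δ * (Δ * ν) = νᵀ * ((Δ * Δ) * ν) := by simp only [Matrix.mul_assoc]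
      _ = 1 := h1
  have hWWT : (Δ * ν) * (Δ * ν)ᵀ = 1 := mul_eq_one_comm.mp hW
  have h2 : Δ * (ν * νᵀ) * Δ = 1 := by
    rw [Matrix.transpose_mul, Matrix.diagonal_transpose] at hWWT
    calc Δ * (ν * νᵀ) * Δ = Δ * ν * (νᵀ * Δ) := by simp only [Matrix.mul_assoc]
      _ = 1 := hWWT
  have h3 : ν * νᵀ = Δ' * Δ' := by
    calc ν * νᵀ = 1 * (ν * νᵀ) * 1 := by rw [Matrix.one_mul, Matrix.mul_one]
      _ = (Δ' * Δ) * (ν * νᵀ) * (Δ * Δ') := by rw [hΔ'Δ, hΔΔ']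
      _ = Δ' * (Δ * (ν * νᵀ) * Δ) * Δ' := by simp only [Matrix.mul_assoc]
      _ = Δ' * 1 * Δ' := by rw [h2]
      _ = Δ' * Δ' := by rw [Matrix.mul_one]
  rw [h3, hΔ', Matrix.diagonal_mul_diagonal]
  have hf : (fun k => (Real.sqrt (clusterSize z k))⁻¹ * (Real.sqrt (clusterSize z k))⁻¹) =
      fun k => ((clusterSize z k : ℝ))⁻¹ := by
    funext k; rw [← mul_inv, Real.mul_self_sqrt (Nat.cast_nonneg _)]
  rw [hf]

lemma P_eq_groundTruth {n r : ℕ} {z : Fin n → Fin r} (hz : Function.Surjective z)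
    {ν : Matrix (Fin r) (Fin r) ℝ} (hUU : (Zmat z * ν)ᵀ * (Zmat z * ν) = 1) :
    (Zmat z * ν) * (Zmat z * ν)ᵀ = groundTruth z := by
  have hd := nu_nuT hz hUU
  have h1 : (Zmat z * ν) * (Zmat z * ν)ᵀ =
      Zmat z * ((ν * νᵀ) * (Zmat z)ᵀ) := by
    rw [Matrix.transpose_mul]
    simp only [Matrix.mul_assoc]
  rw [h1, hd]
  ext i j
  simp only [Matrix.mul_apply, Matrix.diagonal_apply, Matrix.transpose_apply, Zmat,
    Matrix.of_apply, groundTruth]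
  rw [Finset.sum_eq_single (z i)]
  · rw [if_pos rfl, one_mul]
    rw [Finset.sum_eq_single (z i)]
    · by_cases h : z j = z i
      · rw [if_pos rfl, if_pos h.symm, if_pos h]
        rw [mul_one]
      · rw [if_pos rfl, if_neg (fun hh : z j = z i => h hh), if_neg (fun hh : z i = z j => h hh.symm), mul_zero]
    · intro l _ hl
      rw [if_neg (Ne.symm hl), zero_mul]
    · simp
  · intro t _ ht
    rw [if_neg (fun hh : z i = t => ht hh.symm), zero_mul]
  · simp

lemma trace_XUUt {n r : ℕ} (X : Matrix (Fin n) (Fin n) ℝ) (U : Matrix (Fin n) (Fin r) ℝ) :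
    Matrix.trace (X * (U * Uᵀ)) = ∑ k, (fun i => U i k) ⬝ᵥ (X *ᵥ fun i => U i k) := by
  rw [← Matrix.mul_assoc, Matrix.trace_mul_comm]
  simp only [Matrix.trace, Matrix.diag, Matrix.mul_apply, Matrix.transpose_apply,
    dotProduct, Matrix.mulVec]

lemma rayleigh {n r : ℕ} [NeZero r] (X : Matrix (Fin n) (Fin n) ℝ) (hX : X.IsSymm)
    (Uh : Matrix (Fin n) (Fin r) ℝ) (hUh : IsTopEigenvectors X Uh)
    (U : Matrix (Fin n) (Fin r) ℝ) (hUU : Uᵀ * U = 1) :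
    Matrix.trace (X * (U * Uᵀ)) ≤ Matrix.trace (X * (Uh * Uhᵀ)) := by
  obtain ⟨hUhUh, θ, heig, hray⟩ := hUh
  -- θ has a minimum
  obtain ⟨j₀, _, hj₀⟩ := Finset.exists_min_image Finset.univ θ ⟨Classical.arbitrary (Fin r),
    Finset.mem_univ _⟩
  have hj₀' : ∀ j : Fin r, θ j₀ ≤ θ j := fun j => hj₀ j (Finset.mem_univ j)
  -- trace of Uh side
  have htrUh : Matrix.trace (X * (Uh * Uhᵀ)) = ∑ j, θ j := by
    rw [trace_XUUt]
    apply Finset.sum_congr rfl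
    intro j _
    rw [heig j]
    have hnorm : (fun i => Uh i j) ⬝ᵥ (fun i => Uh i j) = 1 := by
      have := congrFun (congrFun hUhUh j) j
      simpa [Matrix.mul_apply, Matrix.one_apply, dotProduct, Matrix.transpose_apply]
        using this
    have : (fun i => Uh i j) ⬝ᵥ (θ j • fun i => Uh i j) =
        θ j * ((fun i => Uh i j) ⬝ᵥ (fun i => Uh i j)) := dotProduct_smul _ _ _
    rw [this, hnorm, mul_one]
  rw [htrUh, trace_XUUt]
  -- column norms of U
  have hUcol : ∀ k, (fun i => U i k) ⬝ᵥ (fun i => U i k) = 1 := by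
    intro k
    have := congrFun (congrFun hUU k) k
    simpa [Matrix.mul_apply, Matrix.one_apply, dotProduct, Matrix.transpose_apply]
      using this
  -- the coefficient matrix
  set c : Fin r → Fin r → ℝ := fun k => Uhᵀ *ᵥ (fun i => U i k) with hc
  -- per-column bound
  have hper : ∀ k, (fun i => U i k) ⬝ᵥ (X *ᵥ fun i => U i k) ≤
      (∑ j, θ j * (c k j)^2) + θ j₀ * (1 - ∑ j, (c k j)^2) := by
    intro k
    set u : Fin n → ℝ := fun i => U i k with hu
    set p : Fin n → ℝ := Uh *ᵥ (c k) with hp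
    set w : Fin n → ℝ := u - p with hw
    have hUhp : Uhᵀ *ᵥ p = c k := by
      rw [hp, Matrix.mulVec_mulVec, hUhUh, Matrix.one_mulVec]
    have hUhw : Uhᵀ *ᵥ w = 0 := by
      rw [hw, Matrix.mulVec_sub, hUhp, hc]
      simp [hu]
    have hwj : ∀ j, (fun i => Uh i j) ⬝ᵥ w = 0 := by
      intro j
      have : (fun i => Uh i j) ⬝ᵥ w = (Uhᵀ *ᵥ w) j := by
        simp [Matrix.mulVec, dotProduct, Matrix.transpose_apply]
      rw [this, hUhw]
      rfl
    have hXUh : X * Uh = Uh * Matrix.diagonal θ := by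
      ext i jj
      have h := congrFun (heig jj) i
      simp only [Matrix.mulVec, dotProduct, Pi.smul_apply, smul_eq_mul] at h
      rw [Matrix.mul_diagonal, Matrix.mul_apply]
      rw [h]; ring
    set d : Fin r → ℝ := fun j => θ j * c k j with hd
    have hdiagv : Matrix.diagonal θ *ᵥ c k = d := by
      ext j
      simp only [Matrix.mulVec, dotProduct, Matrix.diagonal_apply, hd]
      rw [Finset.sum_eq_single j]
      · rw [if_pos rfl]
      · intro l _ hl; rw [if_neg (Ne.symm hl), zero_mul]
      · simp
    have hXp : X *ᵥ p = Uh *ᵥ d := by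
      rw [hp, Matrix.mulVec_mulVec, hXUh, ← Matrix.mulVec_mulVec, hdiagv]
    have hcross1 : w ⬝ᵥ (X *ᵥ p) = 0 := by
      rw [hXp, Matrix.dotProduct_mulVec, ← Matrix.mulVec_transpose, hUhw,
        zero_dotProduct]
    have hcross2 : p ⬝ᵥ (X *ᵥ w) = 0 := by
      rw [Matrix.dotProduct_mulVec, ← Matrix.mulVec_transpose, hX, hXp,
        dotProduct_comm, Matrix.dotProduct_mulVec, ← Matrix.mulVec_transpose, hUhw,
        zero_dotProduct]
    have hpXp : p ⬝ᵥ (X *ᵥ p) = ∑ j, θ j * (c k j)^2 := by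
      rw [hXp, Matrix.dotProduct_mulVec, ← Matrix.mulVec_transpose, hUhp]
      simp only [dotProduct, hd]
      exact Finset.sum_congr rfl fun j _ => by ring
    have hup : u ⬝ᵥ p = ∑ j, (c k j)^2 := by
      rw [hp, Matrix.dotProduct_mulVec, ← Matrix.mulVec_transpose]
      have : Uhᵀ *ᵥ u = c k := by rw [hc]
      rw [this]
      simp only [dotProduct]
      exact Finset.sum_congr rfl fun j _ => by ring
    have hpp : p ⬝ᵥ p = ∑ j, (c k j)^2 := by
      rw [hp, Matrix.dotProduct_mulVec, ← Matrix.mulVec_transpose, hUhp]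
      simp only [dotProduct]
      exact Finset.sum_congr rfl fun j _ => by ring
    have hww : w ⬝ᵥ w = 1 - ∑ j, (c k j)^2 := by
      rw [hw, sub_dotProduct, dotProduct_sub, dotProduct_sub,
        hUcol k, hup, hpp]
      have : p ⬝ᵥ u = u ⬝ᵥ p := dotProduct_comm _ _
      rw [this, hup]
      ring
    have hu' : u = p + w := by rw [hw]; ring
    have hdecomp : u ⬝ᵥ (X *ᵥ u) = p ⬝ᵥ (X *ᵥ p) + w ⬝ᵥ (X *ᵥ w) := by
      calc u ⬝ᵥ (X *ᵥ u) = (p + w) ⬝ᵥ (X *ᵥ (p + w)) := by rw [← hu']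
        _ = p ⬝ᵥ (X *ᵥ p) + p ⬝ᵥ (X *ᵥ w) + (w ⬝ᵥ (X *ᵥ p) + w ⬝ᵥ (X *ᵥ w)) := by
            rw [Matrix.mulVec_add, add_dotProduct, dotProduct_add,
              dotProduct_add]
        _ = p ⬝ᵥ (X *ᵥ p) + w ⬝ᵥ (X *ᵥ w) := by rw [hcross1, hcross2]; ring
    have hrayw := hray w hwj j₀
    rw [hww] at hrayw
    show u ⬝ᵥ (X *ᵥ u) ≤ _
    rw [hdecomp, hpXp]
    have : X.mulVec w = X *ᵥ w := rfl
    linarith [hrayw]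
  -- collect sums
  set s : Fin r → ℝ := fun j => ∑ k, (c k j)^2 with hs
  have hswap : ∑ k, ∑ j, θ j * (c k j)^2 = ∑ j, θ j * s j := by
    rw [Finset.sum_comm]
    exact Finset.sum_congr rfl fun j _ => by rw [hs, Finset.mul_sum]
  have hsle : ∀ j, s j ≤ 1 := by
    intro j
    set xj : Fin n → ℝ := fun i => Uh i j with hxj
    have hcy : ∀ k, c k j = (Uᵀ *ᵥ xj) k := by
      intro k
      simp only [hc, Matrix.mulVec, dotProduct, Matrix.transpose_apply, hxj]
      exact Finset.sum_congr rfl fun i _ => by ring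
    have h1 : s j = (Uᵀ *ᵥ xj) ⬝ᵥ (Uᵀ *ᵥ xj) := by
      rw [hs]
      simp only [dotProduct]
      exact Finset.sum_congr rfl fun k _ => by rw [hcy k]; ring
    have h2 := proj_dot_le U hUU xj
    have h3 : xj ⬝ᵥ xj = 1 := by
      have := congrFun (congrFun hUhUh j) j
      simpa [Matrix.mul_apply, Matrix.one_apply, dotProduct, Matrix.transpose_apply,
        hxj] using this
    rw [h1]
    rw [h3] at h2
    exact h2
  have hsnn : ∀ j, 0 ≤ s j := fun j => Finset.sum_nonneg fun k _ => sq_nonneg _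
  have hsum := Finset.sum_le_sum fun k (_ : k ∈ Finset.univ) => hper k
  have hcollect : ∑ k, ((∑ j, θ j * (c k j)^2) + θ j₀ * (1 - ∑ j, (c k j)^2)) =
      ∑ j, (θ j * s j + θ j₀ * (1 - s j)) := by
    rw [Finset.sum_add_distrib, Finset.sum_add_distrib, hswap]
    congr 1
    rw [← Finset.mul_sum, ← Finset.mul_sum]
    congr 1
    rw [Finset.sum_sub_distrib, Finset.sum_sub_distrib]
    congr 1
    rw [hs]
    exact Finset.sum_comm
  have hfinal : ∑ j, (θ j * s j + θ j₀ * (1 - s j)) ≤ ∑ j, θ j := by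
    apply Finset.sum_le_sum
    intro j _
    nlinarith [hsle j, hj₀' j, hsnn j]
  calc ∑ k, (fun i => U i k) ⬝ᵥ (X *ᵥ fun i => U i k)
      ≤ ∑ k, ((∑ j, θ j * (c k j)^2) + θ j₀ * (1 - ∑ j, (c k j)^2)) := hsum
    _ = ∑ j, (θ j * s j + θ j₀ * (1 - s j)) := hcollect
    _ ≤ ∑ j, θ j := hfinal

lemma vec_dist_comm {d : ℕ} (x y : Fin d → ℝ) :
    Real.sqrt (∑ k, (x k - y k)^2) = Real.sqrt (∑ k, (y k - x k)^2) := by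
  congr 1
  exact Finset.sum_congr rfl fun k _ => by ring

lemma vec_triangle {d : ℕ} (x y w : Fin d → ℝ) :
    Real.sqrt (∑ k, (x k - w k)^2) ≤
      Real.sqrt (∑ k, (x k - y k)^2) + Real.sqrt (∑ k, (y k - w k)^2) := by
  set A : Matrix (Fin 1) (Fin d) ℝ := Matrix.of fun _ k => x k - y k with hA
  set B : Matrix (Fin 1) (Fin d) ℝ := Matrix.of fun _ k => y k - w k with hB
  have hAB : A + B = Matrix.of fun _ k => x k - w k := by
    ext i k; simp [hA, hB]
  have h1 : frobSq A = ∑ k, (x k - y k)^2 := by simp [frobSq, hA]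
  have h2 : frobSq B = ∑ k, (y k - w k)^2 := by simp [frobSq, hB]
  have h3 : frobSq (A + B) = ∑ k, (x k - w k)^2 := by
    rw [hAB]; simp [frobSq]
  have := sqrt_frobSq_add_le A B
  rw [h1, h2, h3] at this
  exact this

lemma Zmat_mul_row {n r : ℕ} (z : Fin n → Fin r) (A : Matrix (Fin r) (Fin r) ℝ)
    (i : Fin n) (l : Fin r) : (Zmat z * A) i l = A (z i) l := by
  simp only [Matrix.mul_apply, Zmat, Matrix.of_apply]
  rw [Finset.sum_eq_single (z i)]
  · rw [if_pos rfl, one_mul]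
  · intro t _ ht; rw [if_neg (fun hh : z i = t => ht hh.symm), zero_mul]
  · simp

set_option maxHeartbeats 3200000 in
/-- Let `X̂` be symmetric with top-`r` eigenvectors `Û`, let `U = Zν` be the
top-`r` eigenvectors of `X₀`, and let `C` (with rows `c_i`) minimize the k-means objective on
the rows of `Û`.  Then there is an orthogonal `O` such that every node `i` with
`‖c_i − Z_iνO‖ < 1/√(2 m_max)` is correctly clustered, and the number of nodes with
`‖c_i − Z_iνO‖ ≥ 1/√(2 m_max)` is at most `64 m_max ‖X̂ − X₀‖_F²`. -/
theorem spectral_kmeans_miscluster_bound {n r : ℕ} [NeZero r] (z : Fin n → Fin r)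
    (hz : Function.Surjective z)
    (Xhat : Matrix (Fin n) (Fin n) ℝ) (hXhat : Xhat.IsSymm)
    (Uhat : Matrix (Fin n) (Fin r) ℝ) (hUhat : IsTopEigenvectors Xhat Uhat)
    (ν : Matrix (Fin r) (Fin r) ℝ)
    (hU : IsTopEigenvectors (groundTruth z) (Zmat z * ν))
    (C : Matrix (Fin n) (Fin r) ℝ) (hCrows : HasAtMostRows C)
    (hCopt : ∀ M : Matrix (Fin n) (Fin r) ℝ, HasAtMostRows M →
      frobSq (Uhat - C) ≤ frobSq (Uhat - M)) :
    ∃ O : Matrix (Fin r) (Fin r) ℝ, Oᵀ * O = 1 ∧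
      (∀ i : Fin n,
        Real.sqrt (∑ k, (C i k - (ν * O) (z i) k) ^ 2) < 1 / Real.sqrt (2 * (mMax z : ℝ)) →
        ∀ j : Fin n, z j ≠ z i →
          Real.sqrt (∑ k, (C i k - (ν * O) (z i) k) ^ 2) <
            Real.sqrt (∑ k, (C i k - (ν * O) (z j) k) ^ 2)) ∧
      ((Finset.univ.filter fun i : Fin n =>
          1 / Real.sqrt (2 * (mMax z : ℝ)) ≤
            Real.sqrt (∑ k, (C i k - (ν * O) (z i) k) ^ 2)).card : ℝ) ≤
        64 * (mMax z : ℝ) * frobSq (Xhat - groundTruth z) := by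
  classical
  have hUU : (Zmat z * ν)ᵀ * (Zmat z * ν) = 1 := hU.1
  have hUhUh : Uhatᵀ * Uhat = 1 := hUhat.1
  set U : Matrix (Fin n) (Fin r) ℝ := Zmat z * ν with hUdef
  set X₀ := groundTruth z with hX₀
  set P : Matrix (Fin n) (Fin n) ℝ := U * Uᵀ with hPdef
  set Ph : Matrix (Fin n) (Fin n) ℝ := Uhat * Uhatᵀ with hPhdef
  have hPX₀ : P = X₀ := P_eq_groundTruth hz hUU
  set E := Xhat - X₀ with hE
  set m : ℝ := (mMax z : ℝ) with hm
  have hm1 : 1 ≤ mMax z := by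
    have h1 := clusterSize_pos hz (Classical.arbitrary (Fin r))
    have h2 : clusterSize z (Classical.arbitrary (Fin r)) ≤ mMax z :=
      Finset.le_sup' (clusterSize z) (Finset.mem_univ _)
    omega
  have hmpos : (0 : ℝ) < m := by
    rw [hm]
    exact_mod_cast lt_of_lt_of_le Nat.zero_lt_one hm1
  have hmle : ∀ k, (m : ℝ)⁻¹ ≤ ((clusterSize z k : ℝ))⁻¹ := by
    intro k
    have h1 : (clusterSize z k : ℝ) ≤ m := by
      rw [hm]
      exact_mod_cast Finset.le_sup' (clusterSize z) (Finset.mem_univ k)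
    have h2 : (0 : ℝ) < (clusterSize z k : ℝ) := by exact_mod_cast clusterSize_pos hz k
    exact inv_anti₀ h2 h1
  have hννT : ν * νᵀ = Matrix.diagonal fun k => ((clusterSize z k : ℝ))⁻¹ := nu_nuT hz hUU
  -- the polar orthogonal matrix
  set M : Matrix (Fin r) (Fin r) ℝ := Uᵀ * Uhat with hMdef
  have hMle : ∀ v : Fin r → ℝ, (M *ᵥ v) ⬝ᵥ (M *ᵥ v) ≤ v ⬝ᵥ v := by
    intro v
    rw [hMdef, ← Matrix.mulVec_mulVec]
    calc (Uᵀ *ᵥ (Uhat *ᵥ v)) ⬝ᵥ (Uᵀ *ᵥ (Uhat *ᵥ v)) ≤ (Uhat *ᵥ v) ⬝ᵥ (Uhat *ᵥ v) :=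
          proj_dot_le U hUU _
      _ = v ⬝ᵥ v := mulVec_isometry Uhat hUhUh v
  obtain ⟨O, hOorth, hOtr⟩ := exists_orth_polar M hMle
  have hOOT : O * Oᵀ = 1 := mul_eq_one_comm.mp hOorth
  have hrowdot : ∀ k l : Fin r, ((ν * O) k) ⬝ᵥ ((ν * O) l) =
      Matrix.diagonal (fun k => ((clusterSize z k : ℝ))⁻¹) k l := by
    intro k l
    have h1 : ((ν * O) * (ν * O)ᵀ) k l = ((ν * O) k) ⬝ᵥ ((ν * O) l) := by
      simp only [Matrix.mul_apply, Matrix.transpose_apply, dotProduct]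
    have h2 : (ν * O) * (ν * O)ᵀ = ν * νᵀ := by
      rw [Matrix.transpose_mul]
      calc ν * O * (Oᵀ * νᵀ) = ν * ((O * Oᵀ) * νᵀ) := by simp only [Matrix.mul_assoc]
        _ = ν * νᵀ := by rw [hOOT, Matrix.one_mul]
    rw [← h1, h2, hννT]
  refine ⟨O, hOorth, ?_, ?_⟩
  · -- correct clustering of good nodes
    intro i hi j hzj
    set x : Fin r → ℝ := fun k => C i k with hx
    set uu : Fin r → ℝ := (ν * O) (z i) with huu
    set vv : Fin r → ℝ := (ν * O) (z j) with hvv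
    have hδpos : 0 < Real.sqrt (2 * m) := Real.sqrt_pos.mpr (by linarith)
    set δ : ℝ := 1 / Real.sqrt (2 * m) with hδ
    have hδnn : 0 < δ := by positivity
    have hδsq : δ ^ 2 = 1 / (2 * m) := by
      rw [hδ, div_pow, one_pow, Real.sq_sqrt (by linarith : (0:ℝ) ≤ 2 * m)]
    have hexp : ∑ k, (uu k - vv k) ^ 2 = (uu ⬝ᵥ uu - 2 * (uu ⬝ᵥ vv)) + vv ⬝ᵥ vv := by
      simp only [dotProduct, Finset.mul_sum, ← Finset.sum_sub_distrib,
        ← Finset.sum_add_distrib]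
      exact Finset.sum_congr rfl fun k _ => by ring
    have huuuu : uu ⬝ᵥ uu = ((clusterSize z (z i) : ℝ))⁻¹ := by
      rw [huu, hrowdot, Matrix.diagonal_apply_eq]
    have hvvvv : vv ⬝ᵥ vv = ((clusterSize z (z j) : ℝ))⁻¹ := by
      rw [hvv, hrowdot, Matrix.diagonal_apply_eq]
    have huuvv : uu ⬝ᵥ vv = 0 := by
      rw [huu, hvv, hrowdot, Matrix.diagonal_apply_ne _ (fun h => hzj (h.symm))]
    have hge : 2 / m ≤ ∑ k, (uu k - vv k) ^ 2 := by
      rw [hexp, huuuu, hvvvv, huuvv]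
      have h2m' : 2 / m = m⁻¹ + m⁻¹ := by rw [div_eq_mul_inv]; ring
      rw [h2m']
      linarith [hmle (z i), hmle (z j)]
    have hduv : Real.sqrt (2 / m) ≤ Real.sqrt (∑ k, (uu k - vv k) ^ 2) :=
      Real.sqrt_le_sqrt hge
    have h2δ : 2 * δ ≤ Real.sqrt (2 / m) := by
      have hval : ((2 : ℝ) * δ) ^ 2 = 2 / m := by
        rw [mul_pow, hδsq]
        field_simp
      rw [← hval, Real.sqrt_sq (by linarith)]
    have htri : Real.sqrt (∑ k, (uu k - vv k) ^ 2) ≤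
        Real.sqrt (∑ k, (uu k - x k) ^ 2) + Real.sqrt (∑ k, (x k - vv k) ^ 2) :=
      vec_triangle uu x vv
    have hcomm : Real.sqrt (∑ k, (uu k - x k) ^ 2) = Real.sqrt (∑ k, (x k - uu k) ^ 2) :=
      vec_dist_comm uu x
    rw [hcomm] at htri
    have hxu : Real.sqrt (∑ k, (x k - uu k) ^ 2) < δ := hi
    have hxv : Real.sqrt (∑ k, (x k - vv k) ^ 2) ≥ δ := by linarith
    calc Real.sqrt (∑ k, (C i k - (ν * O) (z i) k) ^ 2)
        = Real.sqrt (∑ k, (x k - uu k) ^ 2) := rfl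
      _ < δ := hxu
      _ ≤ Real.sqrt (∑ k, (x k - vv k) ^ 2) := hxv
      _ = Real.sqrt (∑ k, (C i k - (ν * O) (z j) k) ^ 2) := rfl
  · -- counting bad nodes
    have hray_tr : Matrix.trace (Xhat * P) ≤ Matrix.trace (Xhat * Ph) := by
      rw [hPdef, hPhdef]
      exact rayleigh Xhat hXhat Uhat hUhat U hUU
    have hXs : Xhatᵀ = Xhat := hXhat
    have hPsym : Pᵀ = P := by
      rw [hPdef, Matrix.transpose_mul, Matrix.transpose_transpose]
    have hPhsym : Phᵀ = Ph := by
      rw [hPhdef, Matrix.transpose_mul, Matrix.transpose_transpose]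
    have hEsym : Eᵀ = E := by
      rw [hE, Matrix.transpose_sub, hXs, ← hPX₀, hPsym, hPX₀]
    have hPP : P * P = P := by
      rw [hPdef]
      calc U * Uᵀ * (U * Uᵀ) = U * ((Uᵀ * U) * Uᵀ) := by simp only [Matrix.mul_assoc]
        _ = U * Uᵀ := by rw [hUU, Matrix.one_mul]
    have hPhPh : Ph * Ph = Ph := by
      rw [hPhdef]
      calc Uhat * Uhatᵀ * (Uhat * Uhatᵀ) = Uhat * ((Uhatᵀ * Uhat) * Uhatᵀ) := by
            simp only [Matrix.mul_assoc]
        _ = Uhat * Uhatᵀ := by rw [hUhUh, Matrix.one_mul]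
    have htrP : Matrix.trace P = (r : ℝ) := by
      rw [hPdef, Matrix.trace_mul_comm, hUU, Matrix.trace_one]
      simp
    have htrPh : Matrix.trace Ph = (r : ℝ) := by
      rw [hPhdef, Matrix.trace_mul_comm, hUhUh, Matrix.trace_one]
      simp
    have htrcomm : Matrix.trace (P * Ph) = Matrix.trace (Ph * P) := Matrix.trace_mul_comm _ _
    have hfrobPPh : frobSq (Ph - P) = 2 * (r : ℝ) - 2 * Matrix.trace (Ph * P) := by
      rw [frobSq_eq_trace, Matrix.transpose_sub, hPsym, hPhsym, Matrix.sub_mul,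
        Matrix.mul_sub, Matrix.mul_sub, Matrix.trace_sub, Matrix.trace_sub, Matrix.trace_sub,
        hPP, hPhPh, htrP, htrPh, htrcomm]
      ring
    have htrX₀ : Matrix.trace (X₀ * (Ph - P)) = Matrix.trace (Ph * P) - (r : ℝ) := by
      rw [← hPX₀, Matrix.mul_sub, Matrix.trace_sub, hPP, htrP, Matrix.trace_mul_comm]
    have hXhat_tr : 0 ≤ Matrix.trace (Xhat * (Ph - P)) := by
      rw [Matrix.mul_sub, Matrix.trace_sub, sub_nonneg]
      exact hray_tr
    have hEtr : Matrix.trace (Eᵀ * (Ph - P)) =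
        Matrix.trace (Xhat * (Ph - P)) - Matrix.trace (X₀ * (Ph - P)) := by
      rw [hEsym, hE, Matrix.sub_mul, Matrix.trace_sub]
    have hCS := trace_mul_le_sqrt E (Ph - P)
    have hhalf : frobSq (Ph - P) / 2 ≤ Matrix.trace (Eᵀ * (Ph - P)) := by
      rw [hEtr, htrX₀]
      have : frobSq (Ph - P) / 2 = (r : ℝ) - Matrix.trace (Ph * P) := by
        rw [hfrobPPh]; ring
      linarith
    have hfrob4 : frobSq (Ph - P) ≤ 4 * frobSq E := by
      nlinarith [Real.sq_sqrt (frobSq_nonneg E), Real.sq_sqrt (frobSq_nonneg (Ph - P)),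
        Real.sqrt_nonneg (frobSq E), Real.sqrt_nonneg (frobSq (Ph - P)),
        sq_nonneg (2 * Real.sqrt (frobSq E) - Real.sqrt (frobSq (Ph - P)))]
    have htrMM : Matrix.trace (Mᵀ * M) = Matrix.trace (Ph * P) := by
      have h1 : Mᵀ * M = Uhatᵀ * (U * (Uᵀ * Uhat)) := by
        rw [hMdef, Matrix.transpose_mul, Matrix.transpose_transpose]
        simp only [Matrix.mul_assoc]
      rw [h1, Matrix.trace_mul_comm]
      have h2 : U * (Uᵀ * Uhat) * Uhatᵀ = P * Ph := by
        rw [hPdef, hPhdef]; simp only [Matrix.mul_assoc]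
      rw [h2, htrcomm]
    have hfrobUO : frobSq (Uhat - U * O) = 2 * (r : ℝ) - 2 * Matrix.trace (Oᵀ * M) := by
      rw [frobSq_eq_trace, Matrix.transpose_sub, Matrix.sub_mul, Matrix.mul_sub,
        Matrix.mul_sub, Matrix.trace_sub, Matrix.trace_sub, Matrix.trace_sub]
      have h1 : Matrix.trace (Uhatᵀ * Uhat) = (r : ℝ) := by rw [hUhUh, Matrix.trace_one]; simp
      have h2 : Matrix.trace ((U * O)ᵀ * (U * O)) = (r : ℝ) := by
        rw [Matrix.transpose_mul]
        have : Oᵀ * Uᵀ * (U * O) = Oᵀ * ((Uᵀ * U) * O) := by simp only [Matrix.mul_assoc]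
        rw [this, hUU, Matrix.one_mul, hOorth, Matrix.trace_one]
        simp
      have h3 : Matrix.trace ((U * O)ᵀ * Uhat) = Matrix.trace (Oᵀ * M) := by
        rw [Matrix.transpose_mul, hMdef, Matrix.mul_assoc]
      have h4 : Matrix.trace (Uhatᵀ * (U * O)) = Matrix.trace (Oᵀ * M) := by
        rw [← Matrix.trace_transpose (Uhatᵀ * (U * O)), Matrix.transpose_mul,
          Matrix.transpose_transpose, Matrix.transpose_mul, hMdef, Matrix.mul_assoc]
      rw [h1, h2, h3, h4]
      ring
    have hUOb : frobSq (Uhat - U * O) ≤ 4 * frobSq E := by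
      rw [hfrobUO]
      have h1 := hOtr
      rw [htrMM] at h1
      linarith [hfrobPPh ▸ hfrob4, h1]
    -- k-means optimality
    have hRows : HasAtMostRows (Zmat z * (ν * O)) := by
      refine ⟨z, fun k => (ν * O) k, fun i => ?_⟩
      funext l
      exact Zmat_mul_row z (ν * O) i l
    have hkm : frobSq (Uhat - C) ≤ frobSq (Uhat - U * O) := by
      have h1 := hCopt (Zmat z * (ν * O)) hRows
      rw [← Matrix.mul_assoc] at h1
      exact h1
    -- triangle inequality
    have htriM : Real.sqrt (frobSq (C - U * O)) ≤
        Real.sqrt (frobSq (C - Uhat)) + Real.sqrt (frobSq (Uhat - U * O)) := by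
      have h1 := sqrt_frobSq_add_le (C - Uhat) (Uhat - U * O)
      rw [sub_add_sub_cancel] at h1
      exact h1
    have hCUhat : frobSq (C - Uhat) ≤ 4 * frobSq E := by
      rw [frobSq_neg_sub]
      linarith
    have hCUO : frobSq (C - U * O) ≤ 16 * frobSq E := by
      have he4 : (0 : ℝ) ≤ 4 * frobSq E := by linarith [frobSq_nonneg E]
      have hb1 : Real.sqrt (frobSq (C - Uhat)) ≤ Real.sqrt (4 * frobSq E) :=
        Real.sqrt_le_sqrt hCUhat
      have hb2 : Real.sqrt (frobSq (Uhat - U * O)) ≤ Real.sqrt (4 * frobSq E) :=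
        Real.sqrt_le_sqrt hUOb
      have htt : Real.sqrt (frobSq (C - U * O)) ≤ 2 * Real.sqrt (4 * frobSq E) := by
        linarith
      have hnA : 0 ≤ Real.sqrt (frobSq (C - U * O)) := Real.sqrt_nonneg _
      have hsq := mul_self_le_mul_self hnA htt
      rw [Real.mul_self_sqrt (frobSq_nonneg _)] at hsq
      have h4e : Real.sqrt (4 * frobSq E) * Real.sqrt (4 * frobSq E) = 4 * frobSq E :=
        Real.mul_self_sqrt he4
      calc frobSq (C - U * O)
          ≤ 2 * Real.sqrt (4 * frobSq E) * (2 * Real.sqrt (4 * frobSq E)) := hsq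
        _ = 4 * (Real.sqrt (4 * frobSq E) * Real.sqrt (4 * frobSq E)) := by ring
        _ = 16 * frobSq E := by rw [h4e]; ring
    -- counting
    have hrowid : ∀ (i : Fin n) (k : Fin r), (C - U * O) i k = C i k - (ν * O) (z i) k := by
      intro i k
      have h5 : (U * O) i k = (ν * O) (z i) k := by
        rw [hUdef, Matrix.mul_assoc]
        exact Zmat_mul_row z (ν * O) i k
      rw [Matrix.sub_apply, h5]
    have hconc : ∀ Bad : Finset (Fin n),
        (∀ i ∈ Bad, 1 / Real.sqrt (2 * m) ≤
          Real.sqrt (∑ k, (C i k - (ν * O) (z i) k) ^ 2)) →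
        (Bad.card : ℝ) ≤ 32 * m * frobSq E := by
      intro Bad hmem
      have hlower : ∀ i ∈ Bad, 1 / (2 * m) ≤ ∑ k, ((C - U * O) i k) ^ 2 := by
        intro i hiB
        have hfi := hmem i hiB
        have hnn : 0 ≤ ∑ k, (C i k - (ν * O) (z i) k) ^ 2 :=
          Finset.sum_nonneg fun k _ => sq_nonneg _
        have hδpos : 0 < Real.sqrt (2 * m) := Real.sqrt_pos.mpr (by linarith)
        have h1 : (1 / Real.sqrt (2 * m)) ^ 2 ≤ ∑ k, (C i k - (ν * O) (z i) k) ^ 2 := by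
          have h6 := mul_self_le_mul_self (by positivity : (0:ℝ) ≤ 1 / Real.sqrt (2 * m)) hfi
          rw [Real.mul_self_sqrt hnn] at h6
          nlinarith [h6]
        have h2 : (1 / Real.sqrt (2 * m)) ^ 2 = 1 / (2 * m) := by
          rw [div_pow, one_pow, Real.sq_sqrt (by linarith : (0:ℝ) ≤ 2 * m)]
        rw [← h2]
        calc (1 / Real.sqrt (2 * m)) ^ 2 ≤ ∑ k, (C i k - (ν * O) (z i) k) ^ 2 := h1
          _ = ∑ k, ((C - U * O) i k) ^ 2 :=
              Finset.sum_congr rfl fun k _ => by rw [hrowid i k]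
      have hcard : (Bad.card : ℝ) * (1 / (2 * m)) ≤
          ∑ i ∈ Bad, ∑ k, ((C - U * O) i k) ^ 2 := by
        have h7 := Finset.card_nsmul_le_sum Bad (fun i => ∑ k, ((C - U * O) i k) ^ 2)
          (1 / (2 * m)) hlower
        rw [nsmul_eq_mul] at h7
        exact h7
      have hup : ∑ i ∈ Bad, ∑ k, ((C - U * O) i k) ^ 2 ≤ frobSq (C - U * O) := by
        rw [frobSq]
        exact Finset.sum_le_sum_of_subset_of_nonneg (Finset.subset_univ Bad)
          fun i _ _ => Finset.sum_nonneg fun k _ => sq_nonneg _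
      have hfinal : (Bad.card : ℝ) * (1 / (2 * m)) ≤ 16 * frobSq E := by linarith
      have h2m : (0 : ℝ) < 2 * m := by linarith
      have h8 := mul_le_mul_of_nonneg_right hfinal h2m.le
      have hone : (1 / (2 * m)) * (2 * m) = 1 := by field_simp
      calc (Bad.card : ℝ) = (Bad.card : ℝ) * ((1 / (2 * m)) * (2 * m)) := by
            rw [hone, mul_one]
        _ = (Bad.card : ℝ) * (1 / (2 * m)) * (2 * m) := by ring
        _ ≤ 16 * frobSq E * (2 * m) := h8
        _ = 32 * m * frobSq E := by ring
    refine le_trans (hconc _ fun i hi => (Finset.mem_filter.mp hi).2) ?_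
    nlinarith [frobSq_nonneg E, hmpos.le]
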